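/- Let x₀ > 0 and let s : [0, x₀] → ℝ be an integrable function satisfying ∫_0^X s(x) dx ≤ X·s(X) for all X ∈ (0, x₀]. Let h : [0, x₀] → ℝ be a monotone decreasing integrable function such that s·h is integrable, and set c = ∫_0^{x₀} h(x) dx. Then ∫_0^{x₀} s(x) h(x) dx ≤ (c/x₀) ∫_0^{x₀} s(x) dx; that is, among all decreasing h with ∫_0^{x₀} h = c, the constant function h ≡ c/x₀ maximizes ∫_0^{x₀} s h. -/

import Mathlib

open MeasureTheory Set intervalIntegral

lemma inv_sq_integral {u x₀ : ℝ} (hu : 0 < u) (hux : u ≤ x₀) :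
    ∫ t in u..x₀, (t^2)⁻¹ = u⁻¹ - x₀⁻¹ := by
  have hsub : Set.uIcc u x₀ ⊆ Set.Ioi (0:ℝ) := by
    rw [Set.uIcc_of_le hux]
    exact fun t ht => lt_of_lt_of_le hu ht.1
  have h := intervalIntegral.integral_eq_sub_of_hasDerivAt (f := fun t => -t⁻¹)
      (f' := fun t => (t^2)⁻¹) (a := u) (b := x₀)
      (fun t ht => by
        have ht0 : t ≠ 0 := ne_of_gt (hsub ht)
        have := (hasDerivAt_inv ht0).neg; simp only [neg_neg] at this; exact this)
      (by
        apply ContinuousOn.intervalIntegrable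
        apply ContinuousOn.inv₀
        · exact (continuousOn_pow 2)
        · intro t ht
          exact pow_ne_zero 2 (ne_of_gt (hsub ht)))
  rw [h]; ring

lemma fub1 {a x₀ : ℝ} (ha : 0 < a) (hax : a ≤ x₀) (s : ℝ → ℝ)
    (hs_int : IntegrableOn s (Set.Icc a x₀)) :
    ∫ t in a..x₀, (∫ u in a..t, s u) * ((t^2)⁻¹)
      = ∫ u in a..x₀, s u * (u⁻¹ - x₀⁻¹) := by
  set μ := volume.restrict (Set.Icc a x₀) with hμdef
  haveI hfin : IsFiniteMeasure μ := by
    constructor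
    rw [hμdef, Measure.restrict_apply_univ, Real.volume_Icc]
    exact ENNReal.ofReal_lt_top
  set k : ℝ × ℝ → ℝ := fun p => if p.2 ≤ p.1 ∧ a ≤ p.1 then (p.1^2)⁻¹ else 0 with hkdef
  have hkmeas : Measurable k := by
    apply Measurable.ite _ ((measurable_fst.pow_const 2).inv) measurable_const
    exact (measurableSet_le measurable_snd measurable_fst).inter
      (measurableSet_le measurable_const measurable_fst)
  have hkbdd : ∀ p, ‖k p‖ ≤ (a^2)⁻¹ := by
    intro p
    rw [hkdef]
    simp only
    split_ifs with hp
    · rw [Real.norm_eq_abs, abs_of_nonneg (by positivity)]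
      apply inv_anti₀ (by positivity)
      have := hp.2
      nlinarith
    · simp; positivity
  have hs2 : Integrable (fun p : ℝ × ℝ => s p.2) (μ.prod μ) := by
    refine (integrable_prod_iff (hs_int.aestronglyMeasurable.comp_snd)).2 ⟨?_, ?_⟩
    · exact Filter.Eventually.of_forall fun t => hs_int
    · simp only []; exact integrable_const (μ := μ) (∫ y, ‖s y‖ ∂μ)
  have hF : Integrable (fun p : ℝ × ℝ => k p * s p.2) (μ.prod μ) :=
    hs2.bdd_mul hkmeas.aestronglyMeasurable (Filter.Eventually.of_forall hkbdd)
  have hswap := MeasureTheory.integral_integral_swap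
    (f := fun t u => k (t, u) * s u) (μ := μ) (ν := μ) hF
  -- left side
  have hL : (∫ t, (∫ u, k (t, u) * s u ∂μ) ∂μ)
      = ∫ t in a..x₀, (∫ u in a..t, s u) * ((t^2)⁻¹) := by
    rw [intervalIntegral.integral_of_le hax, ← MeasureTheory.integral_Icc_eq_integral_Ioc]
    apply MeasureTheory.setIntegral_congr_fun measurableSet_Icc
    intro t ht
    show (∫ u, k (t, u) * s u ∂μ) = (∫ u in a..t, s u) * ((t^2)⁻¹)
    have h1 : (fun u => k (t, u) * s u)
        = Set.indicator (Set.Iic t) (fun u => (t^2)⁻¹ * s u) := by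
      funext u
      simp only [hkdef, Set.indicator_apply, Set.mem_Iic]
      by_cases hcase : u ≤ t
      · rw [if_pos ⟨hcase, ht.1⟩, if_pos hcase]
      · rw [if_neg (fun hc => hcase hc.1), if_neg hcase, zero_mul]
    rw [h1, MeasureTheory.integral_indicator measurableSet_Iic, hμdef,
      Measure.restrict_restrict measurableSet_Iic]
    have h2 : Set.Iic t ∩ Set.Icc a x₀ = Set.Icc a t := by
      ext y
      simp only [Set.mem_inter_iff, Set.mem_Iic, Set.mem_Icc]
      exact ⟨fun ⟨hy1, hy2, _⟩ => ⟨hy2, hy1⟩, fun ⟨hy1, hy2⟩ => ⟨hy2, hy1, hy2.trans ht.2⟩⟩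
    rw [h2, MeasureTheory.integral_const_mul, MeasureTheory.integral_Icc_eq_integral_Ioc,
      ← intervalIntegral.integral_of_le ht.1]
    ring
  -- right side
  have hR : (∫ u, (∫ t, k (t, u) * s u ∂μ) ∂μ)
      = ∫ u in a..x₀, s u * (u⁻¹ - x₀⁻¹) := by
    rw [intervalIntegral.integral_of_le hax, ← MeasureTheory.integral_Icc_eq_integral_Ioc]
    apply MeasureTheory.setIntegral_congr_fun measurableSet_Icc
    intro u hu
    show (∫ t, k (t, u) * s u ∂μ) = s u * (u⁻¹ - x₀⁻¹)
    have h1 : (fun t => k (t, u) * s u)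
        = Set.indicator (Set.Ici u) (fun t => (t^2)⁻¹ * s u) := by
      funext t
      simp only [hkdef, Set.indicator_apply, Set.mem_Ici]
      by_cases hcase : u ≤ t
      · rw [if_pos ⟨hcase, hu.1.trans hcase⟩, if_pos hcase]
      · rw [if_neg (fun hc => hcase hc.1), if_neg hcase, zero_mul]
    rw [h1, MeasureTheory.integral_indicator measurableSet_Ici, hμdef,
      Measure.restrict_restrict measurableSet_Ici]
    have h2 : Set.Ici u ∩ Set.Icc a x₀ = Set.Icc u x₀ := by
      ext y
      simp only [Set.mem_inter_iff, Set.mem_Ici, Set.mem_Icc]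
      exact ⟨fun ⟨hy1, _, hy2⟩ => ⟨hy1, hy2⟩, fun ⟨hy1, hy2⟩ => ⟨hy1, hu.1.trans hy1, hy2⟩⟩
    rw [h2, MeasureTheory.integral_mul_const, MeasureTheory.integral_Icc_eq_integral_Ioc,
      ← intervalIntegral.integral_of_le hu.2, inv_sq_integral (ha.trans_le hu.1) hu.2]
    ring
  rw [← hL, hswap, hR]

lemma key_lemma {x₀ : ℝ} (hx₀ : 0 < x₀) (s : ℝ → ℝ)
    (hs_int : IntegrableOn s (Set.Icc 0 x₀))
    (hs : ∀ X ∈ Set.Ioc (0:ℝ) x₀, (∫ x in (0:ℝ)..X, s x) ≤ X * s X) :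
    ∀ a ∈ Set.Icc (0:ℝ) x₀,
      x₀ * ∫ x in (0:ℝ)..a, s x ≤ a * ∫ x in (0:ℝ)..x₀, s x := by
  intro a ha
  obtain ⟨ha0', hax⟩ := ha
  rcases ha0'.eq_or_lt with rfl | ha0
  · simp
  -- interval integrability of s on subintervals of [0, x₀]
  have hii : ∀ t ∈ Set.Icc (0:ℝ) x₀, ∀ u ∈ Set.Icc (0:ℝ) x₀,
      IntervalIntegrable s volume t u := by
    intro t ht u hu
    rw [intervalIntegrable_iff]
    exact hs_int.mono_set ((Set.uIoc_subset_uIcc ..).trans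
      (by rw [← Set.uIcc_of_le hx₀.le]
          exact Set.uIcc_subset_uIcc (by rwa [Set.uIcc_of_le hx₀.le])
            (by rwa [Set.uIcc_of_le hx₀.le])))
  have h0mem : (0:ℝ) ∈ Set.Icc (0:ℝ) x₀ := Set.left_mem_Icc.2 hx₀.le
  have hamem : a ∈ Set.Icc (0:ℝ) x₀ := ⟨ha0.le, hax⟩
  have hxmem : x₀ ∈ Set.Icc (0:ℝ) x₀ := Set.right_mem_Icc.2 hx₀.le
  set S : ℝ → ℝ := fun t => ∫ x in (0:ℝ)..t, s x with hSdef
  -- continuity of the primitive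
  have hScont : ContinuousOn S (Set.Icc 0 x₀) := by
    have := intervalIntegral.continuousOn_primitive_interval'
      (b₁ := 0) (b₂ := x₀) (a := 0) (μ := volume) (f := s)
      (hii 0 h0mem x₀ hxmem) (by rw [Set.uIcc_of_le hx₀.le]; exact h0mem)
    rwa [Set.uIcc_of_le hx₀.le] at this
  have hsubIcc : Set.Icc a x₀ ⊆ Set.Icc 0 x₀ := Set.Icc_subset_Icc ha0.le le_rfl
  have huIcc : Set.uIcc a x₀ = Set.Icc a x₀ := Set.uIcc_of_le hax
  -- integrability of the two integrands on [a, x₀]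
  have hI1 : IntervalIntegrable (fun t => s t * t⁻¹) volume a x₀ := by
    apply (hii a hamem x₀ hxmem).mul_continuousOn
    rw [huIcc]
    exact ContinuousOn.inv₀ (continuousOn_id) (fun t ht => ne_of_gt (ha0.trans_le ht.1))
  have hI2 : IntervalIntegrable (fun t => S t * (t^2)⁻¹) volume a x₀ := by
    apply ContinuousOn.intervalIntegrable
    rw [huIcc]
    apply (hScont.mono hsubIcc).mul
    exact ContinuousOn.inv₀ (continuousOn_pow 2)
      (fun t ht => pow_ne_zero 2 (ne_of_gt (ha0.trans_le ht.1)))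
  -- nonnegativity
  have hnn : 0 ≤ ∫ t in a..x₀, (s t * t⁻¹ - S t * (t^2)⁻¹) := by
    apply intervalIntegral.integral_nonneg hax
    intro t ht
    have ht0 : 0 < t := ha0.trans_le ht.1
    have hst : S t ≤ t * s t := hs t ⟨ht0, ht.2⟩
    have key : s t * t⁻¹ - S t * (t^2)⁻¹ = (t * s t - S t) * (t^2)⁻¹ := by
      field_simp
    rw [key]
    exact mul_nonneg (by linarith) (by positivity)
  have hsplit : ∫ t in a..x₀, (s t * t⁻¹ - S t * (t^2)⁻¹)
      = (∫ t in a..x₀, s t * t⁻¹) - ∫ t in a..x₀, S t * (t^2)⁻¹ :=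
    intervalIntegral.integral_sub hI1 hI2
  -- decompose S t = S a + ∫ a..t
  have hIc : IntervalIntegrable (fun t => (S a) * (t^2)⁻¹) volume a x₀ := by
    apply ContinuousOn.intervalIntegrable
    rw [huIcc]
    exact continuousOn_const.mul (ContinuousOn.inv₀ (continuousOn_pow 2)
      (fun t ht => pow_ne_zero 2 (ne_of_gt (ha0.trans_le ht.1))))
  have hIp : IntervalIntegrable (fun t => (∫ u in a..t, s u) * (t^2)⁻¹) volume a x₀ := by
    apply ContinuousOn.intervalIntegrable
    rw [huIcc]
    apply ContinuousOn.mul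
    · have := intervalIntegral.continuousOn_primitive_interval'
        (b₁ := a) (b₂ := x₀) (a := a) (μ := volume) (f := s)
        (hii a hamem x₀ hxmem) (by rw [huIcc]; exact ⟨le_rfl, hax⟩)
      rwa [huIcc] at this
    · exact ContinuousOn.inv₀ (continuousOn_pow 2)
        (fun t ht => pow_ne_zero 2 (ne_of_gt (ha0.trans_le ht.1)))
  have hdecomp : ∫ t in a..x₀, S t * (t^2)⁻¹
      = S a * (a⁻¹ - x₀⁻¹) + ∫ t in a..x₀, (∫ u in a..t, s u) * (t^2)⁻¹ := by
    have e1 : ∀ t ∈ Set.uIcc a x₀, S t * (t^2)⁻¹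
        = S a * (t^2)⁻¹ + (∫ u in a..t, s u) * (t^2)⁻¹ := by
      intro t ht
      rw [huIcc] at ht
      have : S a + (∫ u in a..t, s u) = S t :=
        intervalIntegral.integral_add_adjacent_intervals
          (hii 0 h0mem a hamem) (hii a hamem t (hsubIcc ht))
      rw [← this]; ring
    rw [intervalIntegral.integral_congr e1, intervalIntegral.integral_add hIc hIp,
      intervalIntegral.integral_const_mul, inv_sq_integral ha0 hax]
  -- the Fubini identity
  have hfub := fub1 ha0 hax s (hs_int.mono_set hsubIcc)
  -- split the RHS of the Fubini identity
  have hI3 : IntervalIntegrable (fun u => s u * x₀⁻¹) volume a x₀ :=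
    (hii a hamem x₀ hxmem).mul_const _
  have hrhs : ∫ u in a..x₀, s u * (u⁻¹ - x₀⁻¹)
      = (∫ u in a..x₀, s u * u⁻¹) - (S x₀ - S a) * x₀⁻¹ := by
    have e2 : ∀ u ∈ Set.uIcc a x₀, s u * (u⁻¹ - x₀⁻¹)
        = s u * u⁻¹ - s u * x₀⁻¹ := fun u _ => by ring
    rw [intervalIntegral.integral_congr e2, intervalIntegral.integral_sub hI1 hI3,
      intervalIntegral.integral_mul_const]
    have : S a + (∫ u in a..x₀, s u) = S x₀ :=
      intervalIntegral.integral_add_adjacent_intervals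
        (hii 0 h0mem a hamem) (hii a hamem x₀ hxmem)
    have e3 : (∫ u in a..x₀, s u) = S x₀ - S a := by linarith
    rw [e3]
  -- combine
  rw [hsplit, hdecomp, hfub, hrhs] at hnn
  have hfinal : S a * a⁻¹ ≤ S x₀ * x₀⁻¹ := by
    have hx0 : (0:ℝ) < x₀ := hx₀
    have h1 : S a * (a⁻¹ - x₀⁻¹) ≤ (S x₀ - S a) * x₀⁻¹ := by linarith
    have h2 : 0 ≤ a⁻¹ - x₀⁻¹ := by
      rw [sub_nonneg]
      exact inv_anti₀ ha0 hax
    nlinarith [h1]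
  show x₀ * S a ≤ a * S x₀
  rw [show S a * a⁻¹ = S a / a by ring, show S x₀ * x₀⁻¹ = S x₀ / x₀ by ring,
    div_le_div_iff₀ ha0 hx₀] at hfinal
  linarith

lemma fub2 {x₀ : ℝ} (hx₀ : 0 < x₀) (g : ℝ → ℝ) (hg_meas : Measurable g)
    (hg_nonneg : ∀ x, 0 ≤ g x) (r : ℝ → ℝ)
    (hr_int : IntegrableOn r (Set.Icc 0 x₀))
    (hrg_int : IntegrableOn (fun x => r x * g x) (Set.Icc 0 x₀)) :
    Integrable (fun t => ∫ x in Set.Icc 0 x₀ ∩ {x | t < g x}, r x)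
      (volume.restrict (Set.Ioi 0)) ∧
    (∫ t in Set.Ioi (0:ℝ), ∫ x in Set.Icc 0 x₀ ∩ {x | t < g x}, r x)
      = ∫ x in Set.Icc 0 x₀, r x * g x := by
  set μ := volume.restrict (Set.Icc (0:ℝ) x₀) with hμdef
  set ν := volume.restrict (Set.Ioi (0:ℝ)) with hνdef
  set F : ℝ × ℝ → ℝ := fun p => r p.1 * (if p.2 < g p.1 then 1 else 0) with hFdef
  have hindmeas : Measurable (fun p : ℝ × ℝ => if p.2 < g p.1 then (1:ℝ) else 0) := by
    apply Measurable.ite _ measurable_const measurable_const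
    exact measurableSet_lt measurable_snd (hg_meas.comp measurable_fst)
  have hFaesm : AEStronglyMeasurable F (μ.prod ν) :=
    (hr_int.aestronglyMeasurable.comp_fst).mul hindmeas.aestronglyMeasurable
  have hνIio : ∀ x : ℝ, ν (Set.Iio (g x)) = ENNReal.ofReal (g x) := by
    intro x
    rw [hνdef, Measure.restrict_apply measurableSet_Iio]
    rw [show Set.Iio (g x) ∩ Set.Ioi 0 = Set.Ioo 0 (g x) by
      ext y; simp only [Set.mem_inter_iff, Set.mem_Iio, Set.mem_Ioi, Set.mem_Ioo]; tauto]
    rw [Real.volume_Ioo, sub_zero]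
  have hval : ∀ (x c : ℝ), (∫ t, (Set.Iio (g x)).indicator (fun _ => c) t ∂ν) = c * g x := by
    intro x c
    rw [MeasureTheory.integral_indicator measurableSet_Iio, setIntegral_const, measureReal_def, hνIio x,
      ENNReal.toReal_ofReal (hg_nonneg x), smul_eq_mul]
    ring
  have hsec : ∀ x : ℝ, (fun t => F (x, t)) = (Set.Iio (g x)).indicator (fun _ => r x) := by
    intro x
    funext t
    simp only [hFdef, Set.indicator_apply, Set.mem_Iio]
    split_ifs <;> simp
  have hsecn : ∀ x : ℝ, (fun t => ‖F (x, t)‖) = (Set.Iio (g x)).indicator (fun _ => ‖r x‖) := by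
    intro x
    funext t
    simp only [hFdef, Set.indicator_apply, Set.mem_Iio]
    split_ifs <;> simp
  have hF : Integrable F (μ.prod ν) := by
    refine (integrable_prod_iff hFaesm).2 ⟨?_, ?_⟩
    · refine Filter.Eventually.of_forall fun x => ?_
      rw [hsec x, integrable_indicator_iff measurableSet_Iio]
      refine integrableOn_const ?_
      rw [hνIio x]
      exact ENNReal.ofReal_lt_top.ne
    · have heq : (fun x => ∫ t, ‖F (x, t)‖ ∂ν) = fun x => ‖r x‖ * g x := by
        funext x
        rw [hsecn x, hval x]
      rw [heq]
      apply hrg_int.norm.congr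
      refine Filter.Eventually.of_forall fun x => ?_
      show ‖r x * g x‖ = ‖r x‖ * g x
      rw [norm_mul, Real.norm_eq_abs (g x), abs_of_nonneg (hg_nonneg x)]
  have hswap := MeasureTheory.integral_integral_swap (f := fun x t => F (x, t)) hF
  have hleft : (∫ x, (∫ t, F (x, t) ∂ν) ∂μ) = ∫ x in Set.Icc 0 x₀, r x * g x := by
    apply MeasureTheory.integral_congr_ae
    refine Filter.Eventually.of_forall fun x => ?_
    show (∫ t, F (x, t) ∂ν) = r x * g x
    rw [hsec x, hval x]
  have hinner : ∀ t : ℝ, (∫ x, F (x, t) ∂μ) = ∫ x in Set.Icc 0 x₀ ∩ {x | t < g x}, r x := by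
    intro t
    have h1 : (fun x => F (x, t)) = Set.indicator {x | t < g x} r := by
      funext x
      simp only [hFdef, Set.indicator_apply, Set.mem_setOf_eq]
      split_ifs <;> simp
    rw [h1, MeasureTheory.integral_indicator (measurableSet_lt measurable_const hg_meas),
      hμdef, Measure.restrict_restrict (measurableSet_lt measurable_const hg_meas),
      Set.inter_comm]
  constructor
  · exact (hF.integral_prod_right).congr
      (Filter.Eventually.of_forall fun t => hinner t)
  · rw [← hleft, hswap]
    apply MeasureTheory.integral_congr_ae
    exact Filter.Eventually.of_forall fun t => (hinner t).symm

/-- Among all decreasing functions `h` on `[0, x₀]` with `∫ h = c`, the constant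
function `c/x₀` maximizes `∫ s·h`, provided `∫_0^X s ≤ X·s(X)` for all `X ∈ (0, x₀]`. -/
theorem decreasing_rearrangement_lemma
    (x₀ : ℝ) (hx₀ : 0 < x₀) (s h : ℝ → ℝ)
    (hs_int : IntegrableOn s (Set.Icc 0 x₀))
    (hs : ∀ X ∈ Set.Ioc (0:ℝ) x₀, (∫ x in (0:ℝ)..X, s x) ≤ X * s X)
    (hh_anti : AntitoneOn h (Set.Icc 0 x₀))
    (hh_int : IntegrableOn h (Set.Icc 0 x₀))
    (hsh_int : IntegrableOn (fun x => s x * h x) (Set.Icc 0 x₀))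
    (c : ℝ) (hc : c = ∫ x in (0:ℝ)..x₀, h x) :
    (∫ x in (0:ℝ)..x₀, s x * h x) ≤ (c / x₀) * ∫ x in (0:ℝ)..x₀, s x := by
  have hxmem : x₀ ∈ Set.Icc (0:ℝ) x₀ := Set.right_mem_Icc.2 hx₀.le
  set cl : ℝ → ℝ := fun x => min x₀ (max 0 x) with hcldef
  have hcl_mem : ∀ x, cl x ∈ Set.Icc (0:ℝ) x₀ :=
    fun x => ⟨le_min hx₀.le (le_max_left 0 x), min_le_left _ _⟩
  have hcl_eq : ∀ x ∈ Set.Icc (0:ℝ) x₀, cl x = x := by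
    intro x hx
    rw [hcldef]
    simp only [max_eq_right hx.1, min_eq_right hx.2]
  have hcl_mono : Monotone cl := fun x y hxy =>
    min_le_min le_rfl (max_le_max le_rfl hxy)
  set g : ℝ → ℝ := fun x => h (cl x) - h x₀ with hgdef
  have hg_anti : Antitone g := fun x y hxy =>
    sub_le_sub_right (hh_anti (hcl_mem x) (hcl_mem y) (hcl_mono hxy)) _
  have hg_meas : Measurable g := hg_anti.measurable
  have hg_nonneg : ∀ x, 0 ≤ g x := fun x =>
    sub_nonneg.2 (hh_anti (hcl_mem x) hxmem (hcl_mem x).2)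
  have hg_eq : ∀ x ∈ Set.Icc (0:ℝ) x₀, g x = h x - h x₀ := by
    intro x hx
    rw [hgdef]
    simp only [hcl_eq x hx]
  have hconst_int : IntegrableOn (fun _ => h x₀) (Set.Icc (0:ℝ) x₀) :=
    integrableOn_const (by rw [Real.volume_Icc]; exact ENNReal.ofReal_lt_top.ne)
  have hg_int : IntegrableOn g (Set.Icc 0 x₀) := by
    apply MeasureTheory.IntegrableOn.congr_fun (hh_int.sub hconst_int) _ measurableSet_Icc
    intro x hx
    show h x - h x₀ = g x
    rw [hg_eq x hx]
  have hsg_int : IntegrableOn (fun x => s x * g x) (Set.Icc 0 x₀) := by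
    apply MeasureTheory.IntegrableOn.congr_fun
      (hsh_int.sub (hs_int.mul_const (h x₀))) _ measurableSet_Icc
    intro x hx
    show s x * h x - s x * h x₀ = s x * g x
    rw [hg_eq x hx]
    ring
  obtain ⟨hint_s, heq_s⟩ := fub2 hx₀ g hg_meas hg_nonneg s hs_int hsg_int
  obtain ⟨hint_1, heq_1⟩ := fub2 hx₀ g hg_meas hg_nonneg (fun _ => (1:ℝ))
    (integrableOn_const (by rw [Real.volume_Icc]; exact ENNReal.ofReal_lt_top.ne))
    (hg_int.congr_fun (fun x _ => (one_mul (g x)).symm) measurableSet_Icc)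
  set Sx : ℝ := ∫ x in (0:ℝ)..x₀, s x with hSxdef
  -- pointwise comparison of inner integrals
  have hpt : ∀ t ∈ Set.Ioi (0:ℝ),
      (∫ x in Set.Icc 0 x₀ ∩ {x | t < g x}, s x)
        ≤ (Sx / x₀) * ∫ x in Set.Icc 0 x₀ ∩ {x | t < g x}, (1:ℝ) := by
    intro t ht
    set A : Set ℝ := Set.Icc 0 x₀ ∩ {x | t < g x} with hAdef
    have hAsub : A ⊆ Set.Icc 0 x₀ := Set.inter_subset_left
    set a : ℝ := (volume A).toReal with hadef
    have hvolA_le : volume A ≤ ENNReal.ofReal x₀ := by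
      calc volume A ≤ volume (Set.Icc (0:ℝ) x₀) := measure_mono hAsub
        _ = ENNReal.ofReal x₀ := by rw [Real.volume_Icc, sub_zero]
    have ha_mem : a ∈ Set.Icc (0:ℝ) x₀ :=
      ⟨ENNReal.toReal_nonneg, ENNReal.toReal_le_of_le_ofReal hx₀.le hvolA_le⟩
    have hone : (∫ x in A, (1:ℝ)) = a := by
      rw [setIntegral_const, smul_eq_mul, mul_one]; exact measureReal_def _ _
    have hIs : (∫ x in A, s x) = ∫ x in (0:ℝ)..a, s x := by
      rcases Set.eq_empty_or_nonempty A with hA | hA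
      · have hvol : volume A = 0 := by rw [hA]; simp
        have ha0 : a = 0 := by rw [hadef, hvol]; simp
        rw [hA, ha0]
        simp
      · set b : ℝ := sSup A with hbdef
        have hbdd : BddAbove A := ⟨x₀, fun x hx => (hAsub hx).2⟩
        have hb_mem : ∀ x ∈ A, x ≤ b := fun x hx => le_csSup hbdd hx
        have hb_nonneg : 0 ≤ b := by
          obtain ⟨x, hx⟩ := hA
          exact le_trans (hAsub hx).1 (hb_mem x hx)
        have hlower : Set.Ico 0 b ⊆ A := by
          intro y hy
          obtain ⟨x, hxA, hyx⟩ := exists_lt_of_lt_csSup hA hy.2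
          exact ⟨⟨hy.1, (le_of_lt hyx).trans (hAsub hxA).2⟩,
            lt_of_lt_of_le hxA.2 (hg_anti hyx.le)⟩
        have hupper : A ⊆ Set.Icc 0 b := fun x hx => ⟨(hAsub hx).1, hb_mem x hx⟩
        have hvolb : volume A = ENNReal.ofReal b := by
          apply le_antisymm
          · calc volume A ≤ volume (Set.Icc 0 b) := measure_mono hupper
              _ = ENNReal.ofReal b := by rw [Real.volume_Icc, sub_zero]
          · rw [show ENNReal.ofReal b = volume (Set.Ico 0 b) by
              rw [Real.volume_Ico, sub_zero]]
            exact measure_mono hlower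
        have hab : a = b := by rw [hadef, hvolb, ENNReal.toReal_ofReal hb_nonneg]
        have haeeq : A =ᵐ[volume] Set.Ico 0 b := by
          rw [MeasureTheory.ae_eq_set]
          constructor
          · refine measure_mono_null ?_ (measure_singleton b)
            rintro x ⟨hxA, hxn⟩
            have h1 := hupper hxA
            simp only [Set.mem_Ico, not_and, not_lt] at hxn
            show x ∈ ({b} : Set ℝ)
            simp only [Set.mem_singleton_iff]
            exact le_antisymm h1.2 (hxn h1.1)
          · have hempty : Set.Ico 0 b \ A = ∅ := Set.diff_eq_empty.2 hlower
            rw [hempty]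
            exact measure_empty
        rw [MeasureTheory.setIntegral_congr_set haeeq, hab,
          MeasureTheory.integral_Ico_eq_integral_Ioo,
          ← MeasureTheory.integral_Ioc_eq_integral_Ioo,
          ← intervalIntegral.integral_of_le hb_nonneg]
    rw [hone, hIs]
    have hkey := key_lemma hx₀ s hs_int hs a ha_mem
    rw [div_mul_eq_mul_div, le_div_iff₀ hx₀]
    rw [← hSxdef] at hkey
    linarith [hkey]
  -- monotone comparison of the t-integrals
  have hmono : (∫ t in Set.Ioi (0:ℝ), ∫ x in Set.Icc 0 x₀ ∩ {x | t < g x}, s x)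
      ≤ ∫ t in Set.Ioi (0:ℝ),
          (Sx / x₀) * ∫ x in Set.Icc 0 x₀ ∩ {x | t < g x}, (1:ℝ) :=
    MeasureTheory.setIntegral_mono_on hint_s (hint_1.const_mul (Sx / x₀))
      measurableSet_Ioi hpt
  rw [heq_s] at hmono
  rw [MeasureTheory.integral_const_mul, heq_1] at hmono
  have h1g : (∫ x in Set.Icc (0:ℝ) x₀, (1:ℝ) * g x) = ∫ x in Set.Icc (0:ℝ) x₀, g x := by
    apply MeasureTheory.setIntegral_congr_fun measurableSet_Icc
    intro x _
    show (1:ℝ) * g x = g x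
    rw [one_mul]
  rw [h1g] at hmono
  -- compute ∫ g over Icc
  have hS_icc : (∫ x in Set.Icc (0:ℝ) x₀, s x) = Sx := by
    rw [MeasureTheory.integral_Icc_eq_integral_Ioc]
    exact (intervalIntegral.integral_of_le hx₀.le).symm
  have hH_icc : (∫ x in Set.Icc (0:ℝ) x₀, h x) = c := by
    rw [MeasureTheory.integral_Icc_eq_integral_Ioc, hc]
    exact (intervalIntegral.integral_of_le hx₀.le).symm
  have hg_val : (∫ x in Set.Icc (0:ℝ) x₀, g x) = c - x₀ * h x₀ := by
    have e1 : (∫ x in Set.Icc (0:ℝ) x₀, g x)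
        = ∫ x in Set.Icc (0:ℝ) x₀, (h x - h x₀) := by
      exact MeasureTheory.setIntegral_congr_fun measurableSet_Icc hg_eq
    rw [e1, MeasureTheory.integral_sub hh_int hconst_int, setIntegral_const, smul_eq_mul, measureReal_def,
      Real.volume_Icc, sub_zero, ENNReal.toReal_ofReal hx₀.le, hH_icc]
  -- relate ∫ s·g to ∫ s·h
  have hsg_val : (∫ x in Set.Icc (0:ℝ) x₀, s x * g x)
      = (∫ x in Set.Icc (0:ℝ) x₀, s x * h x) - Sx * h x₀ := by
    have e1 : (∫ x in Set.Icc (0:ℝ) x₀, s x * g x)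
        = ∫ x in Set.Icc (0:ℝ) x₀, (s x * h x - s x * h x₀) := by
      apply MeasureTheory.setIntegral_congr_fun measurableSet_Icc
      intro x hx
      show s x * g x = s x * h x - s x * h x₀
      rw [hg_eq x hx]
      ring
    rw [e1, MeasureTheory.integral_sub hsh_int (hs_int.mul_const (h x₀)),
      MeasureTheory.integral_mul_const, hS_icc]
  rw [hsg_val, hg_val] at hmono
  have hgoal : (∫ x in (0:ℝ)..x₀, s x * h x) = ∫ x in Set.Icc (0:ℝ) x₀, s x * h x := by
    rw [MeasureTheory.integral_Icc_eq_integral_Ioc, ← intervalIntegral.integral_of_le hx₀.le]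
  rw [hgoal]
  have halg : Sx / x₀ * (c - x₀ * h x₀) + Sx * h x₀ = c / x₀ * Sx := by
    field_simp
    ring
  linarith [hmono, halg.le]
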